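/- (Theorem 1, part 2, genericity made precise) Suppose that for every player i and every k ≥ 1 the survivor set Σᵏ_{θ_{ik}} contains exactly one element (a unique surviving action for the level-k type at step k). Then Ψᵏ_{θ_{ik}} = Σᵏ_{θ_{ik}} for every player i and every k ∈ ℕ₀, and consequently Ψ^∞_{θ_i} = Σ^∞_{θ_i} for every type θ_i: the CH solution coincides with Δ^κ-rationalizability. -/

import Mathlib

open scoped BigOperators
open Classical

noncomputable section

/-- A belief of a player: a probability distribution over
(opponent level-type, opponent action) pairs. -/
structure Belief (B : Type*) where
  p : ℕ × B → ℝ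
  nonneg : ∀ x, 0 ≤ p x
  hasSum_one : HasSum p 1

/-- Marginal probability assigned to the opponent's level-`t` type. -/
def Belief.marg {B : Type*} [Fintype B] (μ : Belief B) (t : ℕ) : ℝ := ∑ b : B, μ.p (t, b)

/-- Probability assigned by a belief to a set of (level, action) pairs. -/
def Belief.probOn {B : Type*} (μ : Belief B) (S : Set (ℕ × B)) : ℝ := ∑' x, S.indicator μ.p x

/-- `f` normalized to the levels `0, …, k-1` (denoted `f^k` in the paper). -/
def fnorm (f : ℕ → ℝ) (k t : ℕ) : ℝ := f t / ∑ ℓ ∈ Finset.range k, f ℓ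

/-- Membership in `Δ^{θ_{ik}}`: conditions K1–K3 for `k ≥ 1`; no restriction for `k = 0`. -/
def memDelta {B : Type*} [Fintype B] (f : ℕ → ℝ) (k : ℕ) (μ : Belief B) : Prop :=
  k ≠ 0 →
    ((∀ t, k ≤ t → μ.marg t = 0) ∧
     (0 < μ.marg 0 → ∀ b : B, μ.p (0, b) / μ.marg 0 = 1 / (Fintype.card B : ℝ)) ∧
     (∀ t, t < k → μ.marg t = fnorm f k t))

/-- Expected payoff of own action `a` for the own level-`k` type given belief `μ`:
the level-0 type's payoff is constant `0`, all other types get `v`. -/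
def expPay {A B : Type*} (v : A → B → ℝ) (k : ℕ) (μ : Belief B) (a : A) : ℝ :=
  ∑' x : ℕ × B, μ.p x * (if k = 0 then 0 else v a x.2)

/-- `a` is a best response to belief `μ` under the own level-`k` type. -/
def isBR {A B : Type*} (v : A → B → ℝ) (k : ℕ) (μ : Belief B) (a : A) : Prop :=
  ∀ a' : A, expPay v k μ a' ≤ expPay v k μ a

/-- The Δ^κ-rationalization procedure; component 1 is player 1's set of surviving
(level, action) pairs, component 2 is player 2's. -/
def SigmaProc {A B : Type*} [Fintype A] [Fintype B]
    (v1 : A → B → ℝ) (v2 : B → A → ℝ) (f : ℕ → ℝ) :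
    ℕ → Set (ℕ × A) × Set (ℕ × B)
  | 0 => (Set.univ, Set.univ)
  | n + 1 =>
      let P := SigmaProc v1 v2 f n
      ({x | x ∈ P.1 ∧ ∃ μ : Belief B, memDelta f x.1 μ ∧ μ.probOn P.2 = 1 ∧ isBR v1 x.1 μ x.2},
       {y | y ∈ P.2 ∧ ∃ μ : Belief A, memDelta f y.1 μ ∧ μ.probOn P.1 = 1 ∧ isBR v2 y.1 μ y.2})

/-- The section `Σⁿ_{θ_{1k}}` of player 1 (as a set of actions). -/
def SigmaSec1 {A B : Type*} [Fintype A] [Fintype B]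
    (v1 : A → B → ℝ) (v2 : B → A → ℝ) (f : ℕ → ℝ) (n k : ℕ) : Set A :=
  {a | (k, a) ∈ (SigmaProc v1 v2 f n).1}

/-- The section `Σⁿ_{θ_{2k}}` of player 2 (as a set of actions). -/
def SigmaSec2 {A B : Type*} [Fintype A] [Fintype B]
    (v1 : A → B → ℝ) (v2 : B → A → ℝ) (f : ℕ → ℝ) (n k : ℕ) : Set B :=
  {b | (k, b) ∈ (SigmaProc v1 v2 f n).2}

/-- The CH-procedure requirement on beliefs at step `n+1`, given the previous
sections `Ψⁿ` of the opponent: the support of `μ` equals `∪_{t=0}^{n} Ψⁿ_{θ_{-i,t}}`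
and `μ` is conditionally uniform over each `Ψⁿ_{θ_{-i,t}}`. -/
def CHBelief {B : Type*} (Ψ : ℕ → Set B) (n : ℕ) (μ : Belief B) : Prop :=
  (∀ x : ℕ × B, μ.p x ≠ 0 ↔ x.1 ≤ n ∧ x.2 ∈ Ψ x.1) ∧
  (∀ t, t ≤ n → ∀ b b' : B, b ∈ Ψ t → b' ∈ Ψ t → μ.p (t, b) = μ.p (t, b'))

/-- The CH-procedure: step `n` returns, for each player and each level `k`,
the set of actions in `Ψⁿ_{θ_{ik}}`. -/
def CHProc {A B : Type*} [Fintype A] [Fintype B]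
    (v1 : A → B → ℝ) (v2 : B → A → ℝ) (f : ℕ → ℝ) :
    ℕ → (ℕ → Set A) × (ℕ → Set B)
  | 0 => (fun _ => Set.univ, fun _ => Set.univ)
  | n + 1 =>
      let P := CHProc v1 v2 f n
      (fun k =>
        if k = n + 1 then
          {a | ∃ μ : Belief B, memDelta f (n + 1) μ ∧ CHBelief P.2 n μ ∧ isBR v1 (n + 1) μ a}
        else P.1 k,
       fun k =>
        if k = n + 1 then
          {b | ∃ μ : Belief A, memDelta f (n + 1) μ ∧ CHBelief P.1 n μ ∧ isBR v2 (n + 1) μ b}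
        else P.2 k)

/-- `Ψⁿ_{θ_{1k}}` for player 1 (as a set of actions). -/
def CHSec1 {A B : Type*} [Fintype A] [Fintype B]
    (v1 : A → B → ℝ) (v2 : B → A → ℝ) (f : ℕ → ℝ) (n k : ℕ) : Set A :=
  (CHProc v1 v2 f n).1 k

/-- `Ψⁿ_{θ_{2k}}` for player 2 (as a set of actions). -/
def CHSec2 {A B : Type*} [Fintype A] [Fintype B]
    (v1 : A → B → ℝ) (v2 : B → A → ℝ) (f : ℕ → ℝ) (n k : ℕ) : Set B :=
  (CHProc v1 v2 f n).2 k

end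

noncomputable section Aux
set_option linter.unusedSectionVars false

variable {A B : Type*} [Fintype A] [Fintype B]

lemma Belief.summable (μ : Belief B) : Summable μ.p := μ.hasSum_one.summable

lemma Belief.tsum_eq (μ : Belief B) : ∑' x, μ.p x = 1 := μ.hasSum_one.tsum_eq

lemma Belief.probOn_eq_one_iff (μ : Belief B) (S : Set (ℕ × B)) :
    μ.probOn S = 1 ↔ ∀ x, x ∉ S → μ.p x = 0 := by
  constructor
  · intro h x hx
    by_contra hp
    have hlt : μ.probOn S < ∑' y, μ.p y := by
      refine Summable.tsum_lt_tsum (i := x)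
        (fun y => Set.indicator_le_self' (fun z _ => μ.nonneg z) y) ?_
        (μ.summable.indicator S) μ.summable
      rw [Set.indicator_of_notMem hx]
      exact lt_of_le_of_ne (μ.nonneg x) (Ne.symm hp)
    rw [h, μ.tsum_eq] at hlt
    exact lt_irrefl _ hlt
  · intro h
    have he : S.indicator μ.p = μ.p := by
      funext x
      by_cases hx : x ∈ S
      · simp [Set.indicator_of_mem hx]
      · simp [Set.indicator_of_notMem hx, h x hx]
    rw [Belief.probOn, he, μ.tsum_eq]

lemma Belief.p_eq_zero_of_marg (μ : Belief B) {t : ℕ} (h : μ.marg t = 0) (b : B) :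
    μ.p (t, b) = 0 :=
  (Finset.sum_eq_zero_iff_of_nonneg (fun b _ => μ.nonneg (t, b))).1 h b (Finset.mem_univ b)

lemma Belief.marg_eq_single (μ : Belief B) {t : ℕ} {b0 : B}
    (h : ∀ b, b ≠ b0 → μ.p (t, b) = 0) : μ.marg t = μ.p (t, b0) :=
  Finset.sum_eq_single b0 (fun b _ hb => h b hb) (fun hb => absurd (Finset.mem_univ b0) hb)

lemma expPay_zero (v : A → B → ℝ) (μ : Belief B) (a : A) : expPay v 0 μ a = 0 := by
  simp [expPay]

lemma isBR_zero (v : A → B → ℝ) (μ : Belief B) (a : A) : isBR v 0 μ a := by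
  intro a'
  simp [expPay_zero]

def purePt (x0 : ℕ × B) : Belief B where
  p := fun x => if x = x0 then 1 else 0
  nonneg := fun x => by split <;> norm_num
  hasSum_one := hasSum_ite_eq x0 1

lemma purePt_probOn {x0 : ℕ × B} {S : Set (ℕ × B)} (h : x0 ∈ S) :
    (purePt x0).probOn S = 1 := by
  rw [Belief.probOn_eq_one_iff]
  intro x hx
  have hne : x ≠ x0 := fun he => hx (he ▸ h)
  simp [purePt, hne]

lemma memDelta_zero (f : ℕ → ℝ) (μ : Belief B) : memDelta f 0 μ := fun h => absurd rfl h

lemma fnorm_pos (f : ℕ → ℝ) (hf : ∀ n, 0 < f n) {k : ℕ} (t : ℕ) (hk : 0 < k) :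
    0 < fnorm f k t :=
  div_pos (hf t) (Finset.sum_pos (fun i _ => hf i) (Finset.nonempty_range_iff.2 hk.ne'))

end Aux
noncomputable section Aux2
set_option linter.unusedSectionVars false

variable {A B : Type*} [Fintype A] [Fintype B]
variable (v1 : A → B → ℝ) (v2 : B → A → ℝ) (f : ℕ → ℝ)

lemma sigma_succ_1 (n : ℕ) (x : ℕ × A) :
    x ∈ (SigmaProc v1 v2 f (n + 1)).1 ↔
      x ∈ (SigmaProc v1 v2 f n).1 ∧ ∃ μ : Belief B, memDelta f x.1 μ ∧
        μ.probOn (SigmaProc v1 v2 f n).2 = 1 ∧ isBR v1 x.1 μ x.2 := Iff.rfl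

lemma sigma_succ_2 (n : ℕ) (y : ℕ × B) :
    y ∈ (SigmaProc v1 v2 f (n + 1)).2 ↔
      y ∈ (SigmaProc v1 v2 f n).2 ∧ ∃ μ : Belief A, memDelta f y.1 μ ∧
        μ.probOn (SigmaProc v1 v2 f n).1 = 1 ∧ isBR v2 y.1 μ y.2 := Iff.rfl

lemma sigma_antitone {n m : ℕ} (h : n ≤ m) :
    (SigmaProc v1 v2 f m).1 ⊆ (SigmaProc v1 v2 f n).1 ∧
    (SigmaProc v1 v2 f m).2 ⊆ (SigmaProc v1 v2 f n).2 := by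
  induction h with
  | refl => exact ⟨subset_rfl, subset_rfl⟩
  | @step m' h ih =>
    exact ⟨fun x hx => ih.1 ((sigma_succ_1 v1 v2 f m' x).1 hx).1,
           fun y hy => ih.2 ((sigma_succ_2 v1 v2 f m' y).1 hy).1⟩

lemma sigma_zero_mem [Nonempty A] [Nonempty B] (n : ℕ) :
    (∀ a : A, (0, a) ∈ (SigmaProc v1 v2 f n).1) ∧
    (∀ b : B, (0, b) ∈ (SigmaProc v1 v2 f n).2) := by
  induction n with
  | zero => exact ⟨fun _ => trivial, fun _ => trivial⟩
  | succ n ih =>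
    constructor
    · intro a
      exact (sigma_succ_1 v1 v2 f n (0, a)).2
        ⟨ih.1 a, purePt (0, Classical.arbitrary B), memDelta_zero f _,
         purePt_probOn (ih.2 _), isBR_zero _ _ _⟩
    · intro b
      exact (sigma_succ_2 v1 v2 f n (0, b)).2
        ⟨ih.2 b, purePt (0, Classical.arbitrary A), memDelta_zero f _,
         purePt_probOn (ih.1 _), isBR_zero _ _ _⟩

lemma sigma_swap (n : ℕ) :
    SigmaProc v2 v1 f n = ((SigmaProc v1 v2 f n).2, (SigmaProc v1 v2 f n).1) := by
  induction n with
  | zero => rfl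
  | succ n ih => simp only [SigmaProc, ih]

lemma sigmaSec_swap1 (n k : ℕ) : SigmaSec1 v2 v1 f n k = SigmaSec2 v1 v2 f n k := by
  unfold SigmaSec1 SigmaSec2
  rw [sigma_swap]

lemma sigmaSec_swap2 (n k : ℕ) : SigmaSec2 v2 v1 f n k = SigmaSec1 v1 v2 f n k := by
  unfold SigmaSec1 SigmaSec2
  rw [sigma_swap]

lemma ch_succ_eq1 (n : ℕ) :
    (CHProc v1 v2 f (n + 1)).1 (n + 1) =
      {a | ∃ μ : Belief B, memDelta f (n + 1) μ ∧
        CHBelief (CHProc v1 v2 f n).2 n μ ∧ isBR v1 (n + 1) μ a} := by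
  simp [CHProc]

lemma ch_succ_eq2 (n : ℕ) :
    (CHProc v1 v2 f (n + 1)).2 (n + 1) =
      {b | ∃ μ : Belief A, memDelta f (n + 1) μ ∧
        CHBelief (CHProc v1 v2 f n).1 n μ ∧ isBR v2 (n + 1) μ b} := by
  simp [CHProc]

lemma ch_succ_ne (n k : ℕ) (h : k ≠ n + 1) :
    (CHProc v1 v2 f (n + 1)).1 k = (CHProc v1 v2 f n).1 k ∧
    (CHProc v1 v2 f (n + 1)).2 k = (CHProc v1 v2 f n).2 k := by
  constructor <;> simp [CHProc, h]

lemma ch_stab {n k : ℕ} (h : k ≤ n) :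
    (CHProc v1 v2 f n).1 k = (CHProc v1 v2 f k).1 k ∧
    (CHProc v1 v2 f n).2 k = (CHProc v1 v2 f k).2 k := by
  induction n with
  | zero =>
    have : k = 0 := Nat.le_zero.mp h
    subst this; exact ⟨rfl, rfl⟩
  | succ n ih =>
    rcases Nat.eq_or_lt_of_le h with he | hlt
    · subst he; exact ⟨rfl, rfl⟩
    · have hk : k ≤ n := Nat.lt_succ_iff.mp hlt
      have hne : k ≠ n + 1 := by omega
      rw [(ch_succ_ne v1 v2 f n k hne).1, (ch_succ_ne v1 v2 f n k hne).2]
      exact ih hk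

lemma ch_univ {n k : ℕ} (h : n < k) :
    (CHProc v1 v2 f n).1 k = Set.univ ∧ (CHProc v1 v2 f n).2 k = Set.univ := by
  induction n with
  | zero => exact ⟨rfl, rfl⟩
  | succ n ih =>
    have hne : k ≠ n + 1 := by omega
    rw [(ch_succ_ne v1 v2 f n k hne).1, (ch_succ_ne v1 v2 f n k hne).2]
    exact ih (by omega)

lemma ch_swap (n : ℕ) :
    CHProc v2 v1 f n = ((CHProc v1 v2 f n).2, (CHProc v1 v2 f n).1) := by
  induction n with
  | zero => rfl
  | succ n ih => simp only [CHProc, ih]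

lemma chSec_swap1 (n k : ℕ) : CHSec1 v2 v1 f n k = CHSec2 v1 v2 f n k := by
  unfold CHSec1 CHSec2
  rw [ch_swap]

lemma chSec_swap2 (n k : ℕ) : CHSec2 v2 v1 f n k = CHSec1 v1 v2 f n k := by
  unfold CHSec1 CHSec2
  rw [ch_swap]

end Aux2
noncomputable section Aux3
set_option linter.unusedSectionVars false
set_option maxHeartbeats 1000000

variable {A B : Type*} [Fintype A] [Fintype B]

lemma key_step [Nonempty A] [Nonempty B]
    (v1 : A → B → ℝ) (v2 : B → A → ℝ) (f : ℕ → ℝ) (hf : ∀ n, 0 < f n) (m : ℕ)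
    (hstab2 : ∀ t, t ≤ m → ∀ n, t ≤ n → SigmaSec2 v1 v2 f n t = SigmaSec2 v1 v2 f t t)
    (hch2 : ∀ t, t ≤ m → CHSec2 v1 v2 f t t = SigmaSec2 v1 v2 f t t)
    (hgen2 : ∀ t, 1 ≤ t → t ≤ m → ∃ b : B, SigmaSec2 v1 v2 f t t = {b}) :
    (∀ n, m + 1 ≤ n → SigmaSec1 v1 v2 f n (m + 1) = SigmaSec1 v1 v2 f (m + 1) (m + 1)) ∧
    CHSec1 v1 v2 f (m + 1) (m + 1) = SigmaSec1 v1 v2 f (m + 1) (m + 1) := by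
  -- membership transfer: levels t ≤ m of Σ stay fixed across all steps
  have hmem : ∀ t, t ≤ m → ∀ b : B, b ∈ SigmaSec2 v1 v2 f t t →
      ∀ n, (t, b) ∈ (SigmaProc v1 v2 f n).2 := by
    intro t ht b hb n
    rcases le_total n t with h | h
    · exact (sigma_antitone v1 v2 f h).2 hb
    · have he := hstab2 t ht n h
      have : b ∈ SigmaSec2 v1 v2 f n t := he ▸ hb
      exact this
  -- any Δ^{m+1}-belief concentrated on Σ^m is concentrated on every Σ^n
  have hsupp : ∀ μ : Belief B, memDelta f (m + 1) μ →
      μ.probOn (SigmaProc v1 v2 f m).2 = 1 →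
      ∀ n, μ.probOn (SigmaProc v1 v2 f n).2 = 1 := by
    intro μ hμd hμ1 n
    rw [Belief.probOn_eq_one_iff] at hμ1 ⊢
    rintro ⟨t, b⟩ hx
    by_contra hp
    obtain ⟨hK1, _, _⟩ := hμd (Nat.succ_ne_zero m)
    have ht : t ≤ m := by
      by_contra h'
      exact hp (μ.p_eq_zero_of_marg (hK1 t (by omega)) b)
    have hin : (t, b) ∈ (SigmaProc v1 v2 f m).2 := by
      by_contra h'
      exact hp (hμ1 _ h')
    have hb : b ∈ SigmaSec2 v1 v2 f t t := by
      rw [← hstab2 t ht m ht]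
      exact hin
    exact hx (hmem t ht b hb n)
  -- stabilization of Σ at level m+1
  have hstab1 : ∀ n, m + 1 ≤ n →
      SigmaSec1 v1 v2 f n (m + 1) = SigmaSec1 v1 v2 f (m + 1) (m + 1) := by
    intro n hn
    refine Set.Subset.antisymm (fun a ha => (sigma_antitone v1 v2 f hn).1 ha) ?_
    induction n with
    | zero => omega
    | succ n ih =>
      rcases Nat.eq_or_lt_of_le hn with he | hlt
      · rw [he]
      · have hn' : m + 1 ≤ n := by omega
        intro a ha
        obtain ⟨_, μ, hμd, hμ1, hμbr⟩ := (sigma_succ_1 v1 v2 f m (m + 1, a)).1 ha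
        exact (sigma_succ_1 v1 v2 f n (m + 1, a)).2
          ⟨ih hn' ha, μ, hμd, hsupp μ hμd hμ1 n, hμbr⟩
  refine ⟨hstab1, ?_⟩
  -- the sections of Ψ^m agree with the stabilized Σ sections
  have hpsi : ∀ t, t ≤ m → (CHProc v1 v2 f m).2 t = SigmaSec2 v1 v2 f t t := by
    intro t ht
    rw [(ch_stab v1 v2 f ht).2]
    exact hch2 t ht
  refine Set.Subset.antisymm ?_ ?_
  · -- Ψ ⊆ Σ
    intro a ha
    rw [CHSec1, ch_succ_eq1] at ha
    obtain ⟨μ, hμd, hμCH, hμbr⟩ := ha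
    have hprob : ∀ n, μ.probOn (SigmaProc v1 v2 f n).2 = 1 := by
      intro n
      rw [Belief.probOn_eq_one_iff]
      rintro ⟨t, b⟩ hx
      by_contra hp
      obtain ⟨ht, hb⟩ := (hμCH.1 (t, b)).1 hp
      rw [hpsi t ht] at hb
      exact hx (hmem t ht b hb n)
    have hall : ∀ n, (m + 1, a) ∈ (SigmaProc v1 v2 f n).1 := by
      intro n
      induction n with
      | zero => trivial
      | succ n ih =>
        exact (sigma_succ_1 v1 v2 f n (m + 1, a)).2 ⟨ih, μ, hμd, hprob n, hμbr⟩
    exact hall (m + 1)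
  · -- Σ ⊆ Ψ
    intro a ha
    obtain ⟨_, μ, hμd, hμ1, hμbr⟩ := (sigma_succ_1 v1 v2 f m (m + 1, a)).1 ha
    obtain ⟨hK1, hK2, hK3⟩ := hμd (Nat.succ_ne_zero m)
    have hcB : (0 : ℝ) < (Fintype.card B : ℝ) := by
      exact_mod_cast Fintype.card_pos
    have hmarg : ∀ t, t ≤ m → 0 < μ.marg t := by
      intro t ht
      rw [hK3 t (by omega)]
      exact fnorm_pos f hf t (Nat.succ_pos m)
    have hp0 : ∀ b : B, μ.p (0, b) = μ.marg 0 / (Fintype.card B : ℝ) := by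
      intro b
      have h := hK2 (hmarg 0 (Nat.zero_le m)) b
      rw [div_eq_div_iff (hmarg 0 (Nat.zero_le m)).ne' hcB.ne'] at h
      rw [eq_div_iff hcB.ne']
      linarith
    have hoff : ∀ x, x ∉ (SigmaProc v1 v2 f m).2 → μ.p x = 0 :=
      (Belief.probOn_eq_one_iff μ _).1 hμ1
    -- point masses at positive levels
    have hsing : ∀ t, 1 ≤ t → t ≤ m → ∃ b0 : B, SigmaSec2 v1 v2 f t t = {b0} ∧
        μ.p (t, b0) = μ.marg t := by
      intro t ht1 htm
      obtain ⟨b0, hb0⟩ := hgen2 t ht1 htm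
      refine ⟨b0, hb0, ?_⟩
      have hz : ∀ b, b ≠ b0 → μ.p (t, b) = 0 := by
        intro b hb
        refine hoff _ (fun hin => ?_)
        have hbt : b ∈ SigmaSec2 v1 v2 f t t := by
          rw [← hstab2 t htm m htm]
          exact hin
        rw [hb0] at hbt
        exact hb (Set.mem_singleton_iff.mp hbt)
      exact (μ.marg_eq_single hz).symm
    have hCH : CHBelief (CHProc v1 v2 f m).2 m μ := by
      constructor
      · rintro ⟨t, b⟩
        constructor
        · intro hp
          have ht : t ≤ m := by
            by_contra h'
            exact hp (μ.p_eq_zero_of_marg (hK1 t (by omega)) b)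
          refine ⟨ht, ?_⟩
          rw [hpsi t ht, ← hstab2 t ht m ht]
          by_contra h'
          exact hp (hoff _ h')
        · rintro ⟨ht, hb⟩
          rw [hpsi t ht] at hb
          rcases Nat.eq_zero_or_pos t with rfl | htpos
          · rw [hp0 b]
            exact (div_pos (hmarg 0 (Nat.zero_le m)) hcB).ne'
          · obtain ⟨b0, hb0, hpb0⟩ := hsing t htpos ht
            rw [hb0] at hb
            have hbe : b = b0 := hb
            rw [hbe, hpb0]
            exact (hmarg t ht).ne'
      · intro t ht b b' hb hb'
        rcases Nat.eq_zero_or_pos t with rfl | htpos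
        · rw [hp0 b, hp0 b']
        · rw [hpsi t ht] at hb hb'
          obtain ⟨b0, hb0, _⟩ := hsing t htpos ht
          rw [hb0] at hb hb'
          have hbe : b = b0 := hb
          have hbe' : b' = b0 := hb'
          rw [hbe, hbe']
    rw [CHSec1, ch_succ_eq1]
    exact ⟨μ, hμd, hCH, hμbr⟩

end Aux3
noncomputable section Aux4
set_option linter.unusedSectionVars false
set_option maxHeartbeats 1000000

lemma main_all {A B : Type*} [Fintype A] [Fintype B] [Nonempty A] [Nonempty B]
    (v1 : A → B → ℝ) (v2 : B → A → ℝ) (f : ℕ → ℝ) (hf : ∀ n, 0 < f n)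
    (hgen : ∀ k : ℕ, 1 ≤ k →
      (∃ a : A, SigmaSec1 v1 v2 f k k = {a}) ∧ (∃ b : B, SigmaSec2 v1 v2 f k k = {b})) :
    ∀ k : ℕ,
      (∀ n, k ≤ n → SigmaSec1 v1 v2 f n k = SigmaSec1 v1 v2 f k k) ∧
      (∀ n, k ≤ n → SigmaSec2 v1 v2 f n k = SigmaSec2 v1 v2 f k k) ∧
      CHSec1 v1 v2 f k k = SigmaSec1 v1 v2 f k k ∧
      CHSec2 v1 v2 f k k = SigmaSec2 v1 v2 f k k := by
  intro k
  induction k using Nat.strong_induction_on with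
  | _ k ih =>
    cases k with
    | zero =>
      have hA : ∀ n, SigmaSec1 v1 v2 f n 0 = (Set.univ : Set A) :=
        fun n => Set.eq_univ_of_forall fun a => (sigma_zero_mem v1 v2 f n).1 a
      have hB : ∀ n, SigmaSec2 v1 v2 f n 0 = (Set.univ : Set B) :=
        fun n => Set.eq_univ_of_forall fun b => (sigma_zero_mem v1 v2 f n).2 b
      refine ⟨fun n _ => by rw [hA n, hA 0], fun n _ => by rw [hB n, hB 0], ?_, ?_⟩
      · rw [hA 0]; rfl
      · rw [hB 0]; rfl
    | succ m =>
      have h1 := key_step v1 v2 f hf m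
        (fun t ht n hn => (ih t (by omega)).2.1 n hn)
        (fun t ht => (ih t (by omega)).2.2.2)
        (fun t ht1 htm => (hgen t ht1).2)
      have h2 := key_step v2 v1 f hf m
        (fun t ht n hn => by
          rw [sigmaSec_swap2 v1 v2 f n t, sigmaSec_swap2 v1 v2 f t t]
          exact (ih t (by omega)).1 n hn)
        (fun t ht => by
          rw [chSec_swap2 v1 v2 f t t, sigmaSec_swap2 v1 v2 f t t]
          exact (ih t (by omega)).2.2.1)
        (fun t ht1 htm => by
          obtain ⟨a, haa⟩ := (hgen t ht1).1
          exact ⟨a, by rw [sigmaSec_swap2 v1 v2 f t t]; exact haa⟩)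
      refine ⟨h1.1, ?_, h1.2, ?_⟩
      · intro n hn
        have h := h2.1 n hn
        rwa [sigmaSec_swap1 v1 v2 f n (m + 1), sigmaSec_swap1 v1 v2 f (m + 1) (m + 1)] at h
      · have h := h2.2
        rwa [chSec_swap1 v1 v2 f (m + 1) (m + 1),
          sigmaSec_swap1 v1 v2 f (m + 1) (m + 1)] at h

end Aux4
/-- Theorem 1, part 2: if for every player i and every k ≥ 1 the survivor
set `Σᵏ_{θ_{ik}}` is a singleton, then `Ψᵏ_{θ_{ik}} = Σᵏ_{θ_{ik}}` for every i, k, and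
consequently the CH solution coincides with Δ^κ-rationalizability. -/
theorem ch_eq_sigma_of_generic {A B : Type*} [Fintype A] [Fintype B] [Nonempty A] [Nonempty B]
    (v1 : A → B → ℝ) (v2 : B → A → ℝ)
    (f : ℕ → ℝ) (hf : ∀ n, 0 < f n) (hfsum : HasSum f 1)
    (hgen : ∀ k : ℕ, 1 ≤ k →
      (∃ a : A, SigmaSec1 v1 v2 f k k = {a}) ∧ (∃ b : B, SigmaSec2 v1 v2 f k k = {b})) :
    (∀ k : ℕ, CHSec1 v1 v2 f k k = SigmaSec1 v1 v2 f k k) ∧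
    (∀ k : ℕ, CHSec2 v1 v2 f k k = SigmaSec2 v1 v2 f k k) ∧
    (∀ k : ℕ, (⋂ n : ℕ, CHSec1 v1 v2 f n k) = ⋂ n : ℕ, SigmaSec1 v1 v2 f n k) ∧
    (∀ k : ℕ, (⋂ n : ℕ, CHSec2 v1 v2 f n k) = ⋂ n : ℕ, SigmaSec2 v1 v2 f n k) := by
  have H := main_all v1 v2 f hf hgen
  refine ⟨fun k => (H k).2.2.1, fun k => (H k).2.2.2, ?_, ?_⟩
  · intro k
    have h1 : (⋂ n, CHSec1 v1 v2 f n k) = CHSec1 v1 v2 f k k := by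
      apply Set.Subset.antisymm (Set.iInter_subset _ k)
      intro a ha
      refine Set.mem_iInter.2 fun n => ?_
      rcases le_or_gt k n with h | h
      · rw [CHSec1, (ch_stab v1 v2 f h).1]
        exact ha
      · rw [CHSec1, (ch_univ v1 v2 f h).1]
        trivial
    have h2 : (⋂ n, SigmaSec1 v1 v2 f n k) = SigmaSec1 v1 v2 f k k := by
      apply Set.Subset.antisymm (Set.iInter_subset _ k)
      intro a ha
      refine Set.mem_iInter.2 fun n => ?_
      rcases le_or_gt k n with h | h
      · rw [(H k).1 n h]
        exact ha
      · exact (sigma_antitone v1 v2 f h.le).1 ha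
    rw [h1, h2, (H k).2.2.1]
  · intro k
    have h1 : (⋂ n, CHSec2 v1 v2 f n k) = CHSec2 v1 v2 f k k := by
      apply Set.Subset.antisymm (Set.iInter_subset _ k)
      intro b hb
      refine Set.mem_iInter.2 fun n => ?_
      rcases le_or_gt k n with h | h
      · rw [CHSec2, (ch_stab v1 v2 f h).2]
        exact hb
      · rw [CHSec2, (ch_univ v1 v2 f h).2]
        trivial
    have h2 : (⋂ n, SigmaSec2 v1 v2 f n k) = SigmaSec2 v1 v2 f k k := by
      apply Set.Subset.antisymm (Set.iInter_subset _ k)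
      intro b hb
      refine Set.mem_iInter.2 fun n => ?_
      rcases le_or_gt k n with h | h
      · rw [(H k).2.1 n h]
        exact hb
      · exact (sigma_antitone v1 v2 f h.le).2 hb
    rw [h1, h2, (H k).2.2.2]
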